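/- (Maker's ergodic theorem) Let (X, 𝓑, ℙ, T) be a measure-preserving system and (g_n) a sequence of integrable functions with g_n(x) → g_∞(x) ℙ-a.e. and sup_n |g_n| integrable. Then for ℙ-a.e. x, lim_{n→∞} (1/n) ∑_{k=0}^{n−1} g_{n−k}(T^k x) = lim_{n→∞} (1/n) ∑_{k=0}^{n−1} g_∞(T^k x); moreover if the system is ergodic, the limit equals ∫ g_∞ dℙ for a.e. x. -/

import Mathlib

set_option linter.unusedSectionVars false
open MeasureTheory Filter Topology

namespace MakerAux

variable {X : Type*} [MeasurableSpace X]

/-- Birkhoff sums. -/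
noncomputable def S (T : X → X) (f : X → ℝ) (n : ℕ) (x : X) : ℝ :=
  ∑ i ∈ Finset.range n, f (T^[i] x)

lemma S_succ' (T : X → X) (f : X → ℝ) (n : ℕ) (x : X) :
    S T f (n + 1) x = S T f n (T x) + f x := by
  simp only [S, Finset.sum_range_succ']
  simp [Function.iterate_succ_apply]

lemma S_zero (T : X → X) (f : X → ℝ) (x : X) : S T f 0 x = 0 := by simp [S]

lemma S_measurable {T : X → X} (hT : Measurable T) {f : X → ℝ} (hf : Measurable f) (n : ℕ) :
    Measurable (S T f n) := by
  apply Finset.measurable_sum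
  exact fun i _ => hf.comp (hT.iterate i)

lemma integrable_comp_iterate {μ : Measure X} {T : X → X} (hT : MeasurePreserving T μ μ)
    {f : X → ℝ} (hf : Integrable f μ) (i : ℕ) : Integrable (fun x => f (T^[i] x)) μ :=
  ((hT.iterate i).integrable_comp hf.aestronglyMeasurable).2 hf

lemma S_integrable {μ : Measure X} {T : X → X} (hT : MeasurePreserving T μ μ)
    {f : X → ℝ} (hf : Integrable f μ) (n : ℕ) : Integrable (S T f n) μ := by
  apply integrable_finset_sum
  exact fun i _ => integrable_comp_iterate hT hf i

lemma integral_comp_iterate {μ : Measure X} {T : X → X} (hT : MeasurePreserving T μ μ)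
    {f : X → ℝ} (hf : Integrable f μ) (i : ℕ) :
    ∫ x, f (T^[i] x) ∂μ = ∫ x, f x ∂μ := by
  have h := (hT.iterate i)
  conv_rhs => rw [← h.map_eq]
  exact (integral_map h.aemeasurable (by
    rw [h.map_eq]; exact hf.aestronglyMeasurable)).symm


section Maximal

variable {μ : Measure X} [IsProbabilityMeasure μ] {T : X → X}

/-- running maxima of Birkhoff sums -/
noncomputable def M (T : X → X) (f : X → ℝ) : ℕ → X → ℝ
  | 0 => fun _ => 0
  | (N + 1) => fun x => max (M T f N x) (S T f (N + 1) x)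

lemma M_measurable (hT : Measurable T) {f : X → ℝ} (hf : Measurable f) (N : ℕ) :
    Measurable (M T f N) := by
  induction N with
  | zero => exact measurable_const
  | succ N ih => exact ih.max (S_measurable hT hf (N + 1))

lemma M_integrable (hT : MeasurePreserving T μ μ) {f : X → ℝ} (hf : Integrable f μ) (N : ℕ) :
    Integrable (M T f N) μ := by
  induction N with
  | zero => exact integrable_const 0
  | succ N ih => exact ih.sup (S_integrable hT hf (N + 1))

lemma le_M (T : X → X) (f : X → ℝ) {n N : ℕ} (h : n ≤ N) (x : X) : S T f n x ≤ M T f N x := by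
  induction N with
  | zero => simp_all [Nat.le_zero.mp h, S_zero, M]
  | succ N ih =>
    rcases Nat.lt_succ_iff_lt_or_eq.mp (Nat.lt_succ_of_le h) with h' | h'
    · exact le_trans (ih (Nat.lt_succ_iff.mp h')) (le_max_left _ _)
    · rw [h']; exact le_max_right _ _

lemma M_nonneg (T : X → X) (f : X → ℝ) (N : ℕ) (x : X) : 0 ≤ M T f N x := by
  simpa [S_zero] using le_M T f (Nat.zero_le N) x

lemma M_eq_S (T : X → X) (f : X → ℝ) {N : ℕ} {x : X} (h : 0 < M T f N x) :
    ∃ n, 1 ≤ n ∧ n ≤ N ∧ M T f N x = S T f n x := by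
  induction N with
  | zero => simp [M] at h
  | succ N ih =>
    by_cases h' : M T f (N+1) x = S T f (N+1) x
    · exact ⟨N+1, Nat.succ_le_succ (Nat.zero_le N), le_refl _, h'⟩
    · have : M T f (N+1) x = M T f N x := by
        rcases max_choice (M T f N x) (S T f (N+1) x) with hc | hc
        · exact hc
        · exact absurd hc h'
      rw [this] at h ⊢
      obtain ⟨n, h1, h2, h3⟩ := ih h
      exact ⟨n, h1, h2.trans (Nat.le_succ N), h3⟩

lemma M_key (T : X → X) (f : X → ℝ) {N : ℕ} {x : X} (h : 0 < M T f N x) :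
    M T f N x ≤ f x + max (M T f N (T x)) 0 := by
  obtain ⟨n, h1, h2, h3⟩ := M_eq_S T f h
  obtain ⟨m, rfl⟩ := Nat.exists_eq_add_of_le h1
  rw [h3, Nat.add_comm, S_succ']
  have : S T f m (T x) ≤ M T f N (T x) := le_M T f (by omega) (T x)
  have h4 : S T f m (T x) ≤ max (M T f N (T x)) 0 := this.trans (le_max_left _ _)
  linarith

/-- The maximal ergodic theorem. -/
theorem maximal_ergodic (hT : MeasurePreserving T μ μ) {f : X → ℝ}
    (hfm : Measurable f) (hf : Integrable f μ) (N : ℕ) :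
    0 ≤ ∫ x in {x | 0 < M T f N x}, f x ∂μ := by
  set E : Set X := {x | 0 < M T f N x} with hE
  have hEm : MeasurableSet E := measurableSet_lt measurable_const (M_measurable hT.measurable hfm N)
  set φ : X → ℝ := fun x => max (M T f N x) 0 with hφ
  have hφm : Measurable φ := (M_measurable hT.measurable hfm N).max measurable_const
  have hφi : Integrable φ μ := (M_integrable hT hf N).sup (integrable_const 0)
  have hφTi : Integrable (fun x => φ (T x)) μ := (hT.integrable_comp hφi.aestronglyMeasurable).2 hφi
  have key : ∀ x, φ x - φ (T x) ≤ E.indicator f x := by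
    intro x
    by_cases hx : x ∈ E
    · rw [Set.indicator_of_mem hx]
      have h1 : M T f N x ≤ f x + max (M T f N (T x)) 0 := M_key T f hx
      have h2 : φ x = M T f N x := max_eq_left (le_of_lt hx)
      simp only [hφ]; linarith
    · rw [Set.indicator_of_notMem hx]
      have h2 : φ x = 0 := max_eq_right (le_of_not_gt hx)
      have : 0 ≤ φ (T x) := le_max_right _ _
      simp only [hφ] at h2 ⊢; linarith
  have hint : ∫ x, (φ x - φ (T x)) ∂μ = 0 := by
    rw [integral_sub hφi hφTi]
    have : ∫ x, φ (T x) ∂μ = ∫ x, φ x ∂μ := by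
      conv_rhs => rw [← hT.map_eq]
      exact (integral_map hT.aemeasurable (by
        rw [hT.map_eq]; exact hφi.aestronglyMeasurable)).symm
    rw [this, sub_self]
  have h5 : ∫ x, (φ x - φ (T x)) ∂μ ≤ ∫ x, E.indicator f x ∂μ :=
    integral_mono (hφi.sub hφTi) (hf.indicator hEm) key
  rw [hint, integral_indicator hEm] at h5
  exact h5

/-- Limit version over the set where some Birkhoff sum is positive. -/
theorem maximal_ergodic' (hT : MeasurePreserving T μ μ) {f : X → ℝ}
    (hfm : Measurable f) (hf : Integrable f μ) :
    0 ≤ ∫ x in {x | ∃ n, 1 ≤ n ∧ 0 < S T f n x}, f x ∂μ := by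
  set D : Set X := {x | ∃ n, 1 ≤ n ∧ 0 < S T f n x} with hD
  have hEN : ∀ N, MeasurableSet {x | 0 < M T f N x} := fun N =>
    measurableSet_lt measurable_const (M_measurable hT.measurable hfm N)
  have hmono : Monotone (fun N => {x | 0 < M T f N x}) := by
    intro a b hab x hx
    obtain ⟨n, h1, h2, h3⟩ := M_eq_S T f hx
    exact lt_of_lt_of_le hx (h3 ▸ le_M T f (h2.trans hab) x)
  have hunion : (⋃ N, {x | 0 < M T f N x}) = D := by
    ext x
    simp only [Set.mem_iUnion, Set.mem_setOf_eq, hD]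
    constructor
    · rintro ⟨N, hN⟩
      obtain ⟨n, h1, _, h3⟩ := M_eq_S T f hN
      exact ⟨n, h1, h3 ▸ hN⟩
    · rintro ⟨n, h1, h2⟩
      exact ⟨n, lt_of_lt_of_le h2 (le_M T f (le_refl n) x)⟩
  have hio : IntegrableOn f (⋃ N, {x | 0 < M T f N x}) μ := by
    rw [hunion]; exact hf.integrableOn
  have := tendsto_setIntegral_of_monotone hEN hmono hio
  rw [hunion] at this
  exact ge_of_tendsto' this (fun N => maximal_ergodic hT hfm hf N)

end Maximal


section Birkhoff

variable {μ : Measure X} [IsProbabilityMeasure μ] {T : X → X}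

/-- Birkhoff averages. -/
noncomputable def A (T : X → X) (f : X → ℝ) (n : ℕ) (x : X) : ℝ := S T f n x / n

lemma A_measurable (hT : Measurable T) {f : X → ℝ} (hf : Measurable f) (n : ℕ) :
    Measurable (A T f n) := (S_measurable hT hf n).div measurable_const

lemma A_neg (T : X → X) (f : X → ℝ) (n : ℕ) (x : X) :
    A T (fun y => -f y) n x = -A T f n x := by
  simp [A, S, neg_div, Finset.sum_neg_distrib]

lemma freq_shift {f : X → ℝ} {c c' : ℝ} (hcc : c' < c) (x : X)
    (h : ∃ᶠ n in atTop, c < A T f n x) : ∃ᶠ n in atTop, c' < A T f n (T x) := by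
  rw [frequently_atTop] at h ⊢
  intro N
  obtain ⟨B, hB⟩ := exists_nat_gt ((|c| + |f x|) / (c - c'))
  obtain ⟨n, hn, hcn⟩ := h (max (N + 2) (B + 2))
  have hn1 : N + 2 ≤ n := le_trans (le_max_left _ _) hn
  have hn2 : B + 2 ≤ n := le_trans (le_max_right _ _) hn
  refine ⟨n - 1, by omega, ?_⟩
  have hm : n - 1 + 1 = n := by omega
  have hmpos : (0:ℝ) < (n - 1 : ℕ) := by
    have : 1 ≤ n - 1 := by omega
    exact_mod_cast Nat.lt_of_lt_of_le Nat.zero_lt_one this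
  have hnpos : (0:ℝ) < (n:ℕ) := by
    have : (1:ℕ) ≤ n := by omega
    exact_mod_cast this
  have hS : S T f n x = S T f (n-1) (T x) + f x := by
    conv_lhs => rw [← hm, S_succ']
  have hSn : (n:ℝ) * c < S T f n x := by
    rw [A, lt_div_iff₀ hnpos] at hcn; linarith
  have hcast : ((n - 1 : ℕ) : ℝ) = (n:ℝ) - 1 := by
    have : 1 ≤ n := by omega
    push_cast [this]; ring
  have hBm : (|c| + |f x|) < ((n-1:ℕ):ℝ) * (c - c') := by
    rw [hcast]
    have hb : ((|c| + |f x|) / (c - c')) < (n:ℝ) - 1 := by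
      have : (B:ℝ) + 2 ≤ (n:ℝ) := by exact_mod_cast hn2
      linarith
    rw [div_lt_iff₀ (by linarith)] at hb
    linarith [hb]
  rw [A, lt_div_iff₀ hmpos]
  have h1 : (-|c|) ≤ c := neg_abs_le c
  have h2 : f x ≤ |f x| := le_abs_self f x
  have : ((n-1:ℕ):ℝ) * c' < (n:ℝ) * c - f x := by
    rw [hcast]; rw [hcast] at hBm; nlinarith
  linarith [hS, hSn]

lemma freq_shift' {f : X → ℝ} {c c' : ℝ} (hcc : c' < c) (x : X)
    (h : ∃ᶠ n in atTop, c < A T f n (T x)) : ∃ᶠ n in atTop, c' < A T f n x := by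
  rw [frequently_atTop] at h ⊢
  intro N
  obtain ⟨B, hB⟩ := exists_nat_gt ((|c| + |f x|) / (c - c'))
  obtain ⟨n, hn, hcn⟩ := h (max N (B + 1))
  have hn1 : N ≤ n := le_trans (le_max_left _ _) hn
  have hn2 : B + 1 ≤ n := le_trans (le_max_right _ _) hn
  refine ⟨n + 1, by omega, ?_⟩
  have hnpos : (0:ℝ) < (n:ℕ) := by
    have : 1 ≤ n := by omega
    exact_mod_cast Nat.lt_of_lt_of_le Nat.zero_lt_one this
  have hn1pos : (0:ℝ) < ((n+1:ℕ):ℝ) := by positivity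
  have hS : S T f (n+1) x = S T f n (T x) + f x := S_succ' T f n x
  have hSn : (n:ℝ) * c < S T f n (T x) := by
    rw [A, lt_div_iff₀ hnpos] at hcn; linarith
  have hBm : (|c| + |f x|) < ((n+1:ℕ):ℝ) * (c - c') := by
    push_cast
    rw [div_lt_iff₀ (by linarith)] at hB
    have : (B:ℝ) + 1 ≤ (n:ℝ) + 1 := by
      have : (B:ℝ) + 1 ≤ (n:ℝ) := by exact_mod_cast hn2
      linarith
    nlinarith [hB]
  rw [A, lt_div_iff₀ hn1pos]
  have h1 : c ≤ |c| := le_abs_self c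
  have h2 : (-|f x|) ≤ f x := neg_abs_le (f x)
  push_cast
  push_cast at hBm
  nlinarith [hS, hSn]

/-- "limsup of averages exceeds β": with a rational safety margin. -/
def Qf (T : X → X) (f : X → ℝ) (β : ℝ) (x : X) : Prop :=
  ∃ q : ℚ, 0 < q ∧ ∃ᶠ n in atTop, β + q < A T f n x

lemma Qf_invariant (T : X → X) (f : X → ℝ) (β : ℝ) (x : X) :
    Qf T f β x ↔ Qf T f β (T x) := by
  constructor
  · rintro ⟨q, hq, hfreq⟩
    refine ⟨q/2, by positivity, ?_⟩
    have : β + (q/2 : ℚ) < β + q := by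
      push_cast
      have : (0:ℝ) < q := by exact_mod_cast hq
      linarith
    exact freq_shift this x hfreq
  · rintro ⟨q, hq, hfreq⟩
    refine ⟨q/2, by positivity, ?_⟩
    have : β + ((q/2 : ℚ):ℝ) < β + q := by
      push_cast
      have : (0:ℝ) < q := by exact_mod_cast hq
      linarith
    exact freq_shift' this x hfreq

lemma measurableSet_freq (hT : Measurable T) {f : X → ℝ} (hf : Measurable f) (c : ℝ) :
    MeasurableSet {x | ∃ᶠ n in atTop, c < A T f n x} := by
  have : {x | ∃ᶠ n in atTop, c < A T f n x}
      = ⋂ N, ⋃ n, ⋃ (_ : N ≤ n), {x | c < A T f n x} := by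
    ext x
    simp [frequently_atTop]
  rw [this]
  exact MeasurableSet.iInter fun N => MeasurableSet.iUnion fun n => MeasurableSet.iUnion
    fun _ => measurableSet_lt measurable_const (A_measurable hT hf n)

lemma measurableSet_Qf (hT : Measurable T) {f : X → ℝ} (hf : Measurable f) (β : ℝ) :
    MeasurableSet {x | Qf T f β x} := by
  have : {x | Qf T f β x} = ⋃ q : ℚ, ⋃ (_ : 0 < q), {x | ∃ᶠ n in atTop, β + q < A T f n x} := by
    ext x; simp [Qf]
  rw [this]
  exact MeasurableSet.iUnion fun q => MeasurableSet.iUnion fun _ => measurableSet_freq hT hf _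


lemma orbit_mem {T : X → X} {E : Set X} (hinv : ∀ y, y ∈ E ↔ T y ∈ E) (x : X) (i : ℕ) :
    (T^[i] x ∈ E ↔ x ∈ E) := by
  induction i with
  | zero => simp
  | succ i ih => rw [Function.iterate_succ_apply', ← hinv]; exact ih

/-- Key inequality from the maximal ergodic theorem on an invariant set. -/
lemma key_ineq (hT : MeasurePreserving T μ μ) {f : X → ℝ}
    (hfm : Measurable f) (hf : Integrable f μ) (β : ℝ) (E : Set X)
    (hEm : MeasurableSet E) (hinv : ∀ y, y ∈ E ↔ T y ∈ E)
    (hQ : ∀ x ∈ E, ∃ n : ℕ, 1 ≤ n ∧ (n:ℝ) * β < S T f n x) :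
    β * (μ E).toReal ≤ ∫ x in E, f x ∂μ := by
  set g : X → ℝ := E.indicator (fun y => f y - β) with hg
  have hgm : Measurable g := (hfm.sub measurable_const).indicator hEm
  have hgi : Integrable g μ := (hf.sub (integrable_const β)).indicator hEm
  have hSg : ∀ n x, S T g n x = E.indicator (fun y => S T f n y - n * β) x := by
    intro n x
    by_cases hx : x ∈ E
    · rw [Set.indicator_of_mem hx]
      have : ∀ i, g (T^[i] x) = f (T^[i] x) - β := by
        intro i
        rw [hg, Set.indicator_of_mem ((orbit_mem hinv x i).mpr hx)]
      simp only [S, this, Finset.sum_sub_distrib, Finset.sum_const, Finset.card_range,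
        nsmul_eq_mul]
    · rw [Set.indicator_of_notMem hx]
      have : ∀ i, g (T^[i] x) = 0 := by
        intro i
        rw [hg, Set.indicator_of_notMem (fun hmem => hx ((orbit_mem hinv x i).mp hmem))]
      simp [S, this]
  have hD : {x | ∃ n, 1 ≤ n ∧ 0 < S T g n x} = E := by
    ext x
    simp only [Set.mem_setOf_eq]
    constructor
    · rintro ⟨n, h1, h2⟩
      by_contra hx
      rw [hSg, Set.indicator_of_notMem hx] at h2
      exact lt_irrefl _ h2
    · intro hx
      obtain ⟨n, h1, h2⟩ := hQ x hx
      refine ⟨n, h1, ?_⟩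
      rw [hSg, Set.indicator_of_mem hx]
      linarith
  have h0 : 0 ≤ ∫ x in E, g x ∂μ := by
    have := maximal_ergodic' hT hgm hgi
    rwa [hD] at this
  have heq : ∫ x in E, g x ∂μ = ∫ x in E, (f x - β) ∂μ :=
    setIntegral_congr_fun hEm (fun x hx => Set.indicator_of_mem hx _)
  have hsub : ∫ x in E, (f x - β) ∂μ = (∫ x in E, f x ∂μ) - β * (μ E).toReal := by
    rw [integral_sub hf.integrableOn (integrable_const β).integrableOn]
    rw [setIntegral_const]
    simp [mul_comm, Measure.real]
  rw [heq, hsub] at h0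
  linarith

/-- oscillation sets are null -/
lemma osc_null (hT : MeasurePreserving T μ μ) {f : X → ℝ}
    (hfm : Measurable f) (hf : Integrable f μ) (α β : ℚ) (hαβ : α < β) :
    μ {x | Qf T (fun y => -f y) (-(α:ℝ)) x ∧ Qf T f (β:ℝ) x} = 0 := by
  set E : Set X := {x | Qf T (fun y => -f y) (-(α:ℝ)) x ∧ Qf T f (β:ℝ) x} with hE
  have hEm : MeasurableSet E :=
    (measurableSet_Qf hT.measurable hfm.neg _).inter (measurableSet_Qf hT.measurable hfm _)
  have hinv : ∀ y, y ∈ E ↔ T y ∈ E := by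
    intro y
    simp only [hE, Set.mem_setOf_eq]
    rw [← Qf_invariant, ← Qf_invariant]
  have freq_to_ex : ∀ (h : X → ℝ) (c : ℝ) x, Qf T h c x → ∃ n : ℕ, 1 ≤ n ∧ (n:ℝ) * c < S T h n x := by
    rintro h c x ⟨q, hq, hfreq⟩
    obtain ⟨n, hn, hcn⟩ := frequently_atTop.mp hfreq 1
    refine ⟨n, hn, ?_⟩
    have hnpos : (0:ℝ) < n := by exact_mod_cast hn
    rw [A, lt_div_iff₀ hnpos] at hcn
    have hq' : (0:ℝ) < q := by exact_mod_cast hq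
    nlinarith
  have h1 : (β:ℝ) * (μ E).toReal ≤ ∫ x in E, f x ∂μ :=
    key_ineq hT hfm hf _ E hEm hinv (fun x hx => freq_to_ex f β x hx.2)
  have h2 : (-(α:ℝ)) * (μ E).toReal ≤ ∫ x in E, (-f x) ∂μ :=
    key_ineq hT hfm.neg hf.neg _ E hEm hinv (fun x hx => freq_to_ex _ _ x hx.1)
  rw [integral_neg] at h2
  have hαβ' : (α:ℝ) < β := by exact_mod_cast hαβ
  have htR : (μ E).toReal = 0 := by nlinarith [ENNReal.toReal_nonneg (a := μ E)]
  have hfin : μ E ≠ ⊤ := measure_ne_top μ E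
  exact (ENNReal.toReal_eq_zero_iff _).mp htR |>.resolve_right hfin

/-- the set where averages are frequently above every integer is null -/
lemma unbdd_null (hT : MeasurePreserving T μ μ) {f : X → ℝ}
    (hfm : Measurable f) (hf : Integrable f μ) :
    μ {x | ∀ m : ℕ, ∃ᶠ n in atTop, (m:ℝ) < A T f n x} = 0 := by
  set U : Set X := {x | ∀ m : ℕ, ∃ᶠ n in atTop, (m:ℝ) < A T f n x} with hU
  have key : ∀ m : ℕ, 1 ≤ m → μ U ≤ ENNReal.ofReal ((∫ x, |f x| ∂μ) / m) := by
    intro m hm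
    set fm : X → ℝ := fun y => f y - m with hfm'
    set D : Set X := {x | ∃ n, 1 ≤ n ∧ 0 < S T fm n x} with hD
    have hfmm : Measurable fm := hfm.sub measurable_const
    have hfmi : Integrable fm μ := hf.sub (integrable_const _)
    have hDm : MeasurableSet D := by
      have hDeq : D = ⋃ n, ⋃ (_ : 1 ≤ n), {x | 0 < S T fm n x} := by ext x; simp [hD]
      rw [hDeq]
      exact MeasurableSet.iUnion fun n => MeasurableSet.iUnion fun _ =>
        measurableSet_lt measurable_const (S_measurable hT.measurable hfmm n)
    have hSfm : ∀ n x, S T fm n x = S T f n x - n * m := by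
      intro n x
      simp only [hfm', S, Finset.sum_sub_distrib, Finset.sum_const, Finset.card_range,
        nsmul_eq_mul]
    have hsub : U ⊆ D := by
      intro x hx
      obtain ⟨n, hn, hcn⟩ := frequently_atTop.mp (hx m) 1
      refine ⟨n, hn, ?_⟩
      have hnpos : (0:ℝ) < n := by exact_mod_cast hn
      rw [A, lt_div_iff₀ hnpos] at hcn
      rw [hSfm]; linarith
    have h0 : 0 ≤ ∫ x in D, fm x ∂μ := maximal_ergodic' hT hfmm hfmi
    have hsplit : ∫ x in D, fm x ∂μ = (∫ x in D, f x ∂μ) - m * (μ D).toReal := by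
      rw [hfm']
      rw [integral_sub hf.integrableOn (integrable_const _).integrableOn, setIntegral_const]
      simp [mul_comm, Measure.real]
    have habs : ∫ x in D, f x ∂μ ≤ ∫ x, |f x| ∂μ := by
      calc ∫ x in D, f x ∂μ ≤ ∫ x in D, |f x| ∂μ :=
            setIntegral_mono hf.integrableOn hf.abs.integrableOn (fun x => le_abs_self _)
        _ ≤ ∫ x, |f x| ∂μ := setIntegral_le_integral hf.abs
            (Filter.Eventually.of_forall fun x => abs_nonneg _)
    have hmuD : (μ D).toReal ≤ (∫ x, |f x| ∂μ) / m := by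
      rw [hsplit] at h0
      have hmpos : (0:ℝ) < m := by exact_mod_cast hm
      rw [le_div_iff₀ hmpos]
      nlinarith
    calc μ U ≤ μ D := measure_mono hsub
      _ = ENNReal.ofReal ((μ D).toReal) := (ENNReal.ofReal_toReal (measure_ne_top μ D)).symm
      _ ≤ ENNReal.ofReal ((∫ x, |f x| ∂μ) / m) := ENNReal.ofReal_le_ofReal hmuD
  have htend : Tendsto (fun m : ℕ => ENNReal.ofReal ((∫ x, |f x| ∂μ) / m)) atTop (𝓝 0) := by
    have := ENNReal.tendsto_ofReal (tendsto_const_div_atTop_nhds_zero_nat (∫ x, |f x| ∂μ))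
    simpa using this
  have : μ U ≤ 0 := ge_of_tendsto htend (by
    filter_upwards [eventually_ge_atTop 1] with m hm
    exact key m hm)
  simpa using this


/-- Birkhoff: the ergodic averages converge a.e. -/
theorem birkhoff_exists (hT : MeasurePreserving T μ μ) {f : X → ℝ}
    (hfm : Measurable f) (hf : Integrable f μ) :
    ∀ᵐ x ∂μ, ∃ L : ℝ, Tendsto (fun n => A T f n x) atTop (𝓝 L) := by
  have hae1 : ∀ᵐ x ∂μ, ¬ (∀ m : ℕ, ∃ᶠ n in atTop, (m:ℝ) < A T f n x) := by
    rw [ae_iff]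
    have he : {a | ¬¬ (∀ m : ℕ, ∃ᶠ n in atTop, (m:ℝ) < A T f n a)}
        = {x | ∀ m : ℕ, ∃ᶠ n in atTop, (m:ℝ) < A T f n x} := by
      ext a; exact not_not
    rw [he]; exact unbdd_null hT hfm hf
  have hae2 : ∀ᵐ x ∂μ, ¬ (∀ m : ℕ, ∃ᶠ n in atTop, (m:ℝ) < A T (fun y => -f y) n x) := by
    rw [ae_iff]
    have he : {a | ¬¬ (∀ m : ℕ, ∃ᶠ n in atTop, (m:ℝ) < A T (fun y => -f y) n a)}
        = {x | ∀ m : ℕ, ∃ᶠ n in atTop, (m:ℝ) < A T (fun y => -f y) n x} := by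
      ext a; exact not_not
    rw [he]; exact unbdd_null hT hfm.neg hf.neg
  have hae3 : ∀ᵐ x ∂μ, ∀ p : ℚ × ℚ,
      p.1 < p.2 → ¬ (Qf T (fun y => -f y) (-(p.1:ℝ)) x ∧ Qf T f (p.2:ℝ) x) := by
    rw [ae_all_iff]
    intro p
    by_cases hp : p.1 < p.2
    · have := osc_null hT hfm hf p.1 p.2 hp
      rw [ae_iff]
      convert this using 2
      ext x; simp [hp]
    · filter_upwards with x h; exact absurd h hp
  filter_upwards [hae1, hae2, hae3] with x h1 h2 h3
  obtain ⟨m1, hm1⟩ := not_forall.mp h1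
  obtain ⟨m2, hm2⟩ := not_forall.mp h2
  rw [not_frequently] at hm1 hm2
  have hub : ∀ᶠ n in atTop, A T f n x ≤ m1 := by
    filter_upwards [hm1] with n hn; exact not_lt.mp hn
  have hlb : ∀ᶠ n in atTop, -(m2:ℝ) ≤ A T f n x := by
    filter_upwards [hm2] with n hn
    rw [A_neg] at hn
    have := not_lt.mp hn
    linarith
  have hbddA : IsBoundedUnder (· ≤ ·) atTop (fun n => A T f n x) := ⟨(m1:ℝ), by
    rwa [eventually_map]⟩
  have hbddB : IsBoundedUnder (· ≥ ·) atTop (fun n => A T f n x) := ⟨-(m2:ℝ), by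
    rwa [eventually_map]⟩
  set i := liminf (fun n => A T f n x) atTop with hi
  set s := limsup (fun n => A T f n x) atTop with hs
  have his : i ≤ s := liminf_le_limsup hbddA hbddB
  have heq : i = s := by
    by_contra hne
    have hlt : i < s := lt_of_le_of_ne his hne
    obtain ⟨a, hia, has⟩ := exists_rat_btwn hlt
    obtain ⟨b, hab, hbs⟩ := exists_rat_btwn has
    obtain ⟨c, hbc, hcs⟩ := exists_rat_btwn hbs
    obtain ⟨d, hcd, hds⟩ := exists_rat_btwn hcs
    have hab' : a < b := by exact_mod_cast hab
    have hbc' : b < c := by exact_mod_cast hbc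
    have hcd' : c < d := by exact_mod_cast hcd
    have freq1 : ∃ᶠ n in atTop, A T f n x < a :=
      frequently_lt_of_liminf_lt hbddA.isCoboundedUnder_ge hia
    have freq2 : ∃ᶠ n in atTop, (d:ℝ) < A T f n x :=
      frequently_lt_of_lt_limsup hbddB.isCoboundedUnder_le hds
    apply h3 (b, c) hbc'
    constructor
    · refine ⟨b - a, by simpa using hab', ?_⟩
      have : ∀ n, A T f n x < a → (-(b:ℝ)) + ((b - a : ℚ):ℝ) < A T (fun y => -f y) n x := by
        intro n hn
        rw [A_neg]
        push_cast
        linarith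
      exact freq1.mono this
    · refine ⟨d - c, by simpa using hcd', ?_⟩
      have : ∀ n, (d:ℝ) < A T f n x → (c:ℝ) + ((d - c : ℚ):ℝ) < A T f n x := by
        intro n hn; push_cast; linarith
      exact freq2.mono this
  exact ⟨i, tendsto_of_liminf_eq_limsup rfl heq.symm hbddA hbddB⟩

/-- Birkhoff ergodic theorem, ergodic case: averages tend to the space mean. -/
theorem birkhoff_ergodic (hT : MeasurePreserving T μ μ) (hErg : Ergodic T μ) {f : X → ℝ}
    (hfm : Measurable f) (hf : Integrable f μ) :
    ∀ᵐ x ∂μ, Tendsto (fun n => A T f n x) atTop (𝓝 (∫ y, f y ∂μ)) := by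
  have main : ∀ (h : X → ℝ), Measurable h → Integrable h μ → ∀ β : ℚ, (∫ y, h y ∂μ) < β →
      ∀ᵐ x ∂μ, ¬ Qf T h (β:ℝ) x := by
    intro h hhm hhi β hβ
    set Q : Set X := {x | Qf T h (β:ℝ) x} with hQdef
    have hQm : MeasurableSet Q := measurableSet_Qf hT.measurable hhm _
    have hQinv : T ⁻¹' Q = Q := by
      ext y
      simp only [Set.mem_preimage, hQdef, Set.mem_setOf_eq]
      exact (Qf_invariant T h (β:ℝ) y).symm
    rcases hErg.toPreErgodic.ae_empty_or_univ hQm hQinv with hc | hc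
    · have : μ Q = 0 := by
        rw [measure_congr hc]; simp
      rw [ae_iff]
      simpa using this
    · exfalso
      have hμQ : μ Q = 1 := by
        rw [measure_congr hc]; simp
      have hkey : (β:ℝ) * (μ Q).toReal ≤ ∫ x in Q, h x ∂μ := by
        apply key_ineq hT hhm hhi _ Q hQm
        · intro y
          exact Qf_invariant T h (β:ℝ) y
        · rintro x ⟨q, hq, hfreq⟩
          obtain ⟨n, hn, hcn⟩ := frequently_atTop.mp hfreq 1
          refine ⟨n, hn, ?_⟩
          have hnpos : (0:ℝ) < n := by exact_mod_cast hn
          rw [A, lt_div_iff₀ hnpos] at hcn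
          have hq' : (0:ℝ) < q := by exact_mod_cast hq
          nlinarith
      have hQc : μ Qᶜ = 0 := by
        rw [measure_compl hQm (measure_ne_top μ Q), hμQ, measure_univ, tsub_self]
      have hQint : ∫ x in Q, h x ∂μ = ∫ y, h y ∂μ := by
        have := integral_add_compl hQm hhi
        have hz : ∫ x in Qᶜ, h x ∂μ = 0 := by
          rw [Measure.restrict_eq_zero.mpr hQc]
          simp
        linarith
      rw [hμQ, hQint] at hkey
      simp at hkey
      linarith
  have hupper : ∀ᵐ x ∂μ, ∀ β : ℚ, (∫ y, f y ∂μ) < β → ¬ Qf T f (β:ℝ) x := by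
    rw [ae_all_iff]
    intro β
    by_cases hβ : (∫ y, f y ∂μ) < β
    · filter_upwards [main f hfm hf β hβ] with x hx
      exact fun _ => hx
    · filter_upwards with x h; exact absurd h hβ
  have hlower : ∀ᵐ x ∂μ, ∀ α : ℚ, (∫ y, -f y ∂μ) < α → ¬ Qf T (fun y => -f y) (α:ℝ) x := by
    rw [ae_all_iff]
    intro α
    by_cases hα : (∫ y, -f y ∂μ) < α
    · filter_upwards [main _ hfm.neg hf.neg α hα] with x hx
      exact fun _ => hx
    · filter_upwards with x h; exact absurd h hα
  filter_upwards [hupper, hlower] with x hup hlo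
  rw [Metric.tendsto_atTop]
  intro ε hε
  set L : ℝ := ∫ y, f y ∂μ with hL
  obtain ⟨β, hβ1, hβ2⟩ := exists_rat_btwn (show L < L + ε/2 by linarith)
  obtain ⟨α, hα1, hα2⟩ := exists_rat_btwn (show L - ε/2 < L by linarith)
  obtain ⟨q, hq1, hq2⟩ := exists_rat_btwn (show (0:ℝ) < ε/2 by linarith)
  have hq' : 0 < q := by exact_mod_cast hq1
  have hupev : ∀ᶠ n in atTop, A T f n x ≤ (β:ℝ) + q := by
    have hnq := hup β hβ1
    rw [Qf] at hnq
    push_neg at hnq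
    have := hnq q hq'
    filter_upwards [this] with n hn
    exact hn
  have hloev : ∀ᶠ n in atTop, (α:ℝ) - q ≤ A T f n x := by
    have hint : (∫ y, -f y ∂μ) < (-α : ℚ) := by
      rw [integral_neg]
      push_cast
      linarith
    have hnq := hlo (-α) hint
    rw [Qf] at hnq
    push_neg at hnq
    have := hnq q hq'
    filter_upwards [this] with n hn
    have := hn
    rw [A_neg] at this
    push_cast at this
    linarith
  obtain ⟨N, hN⟩ := ((hupev.and hloev).and (eventually_ge_atTop 0)).exists_forall_of_atTop
  refine ⟨N, fun n hn => ?_⟩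
  obtain ⟨⟨hu, hl⟩, -⟩ := hN n hn
  rw [Real.dist_eq, abs_sub_lt_iff]
  constructor
  · have : (β:ℝ) + q < L + ε := by linarith
    linarith
  · have : L - ε < (α:ℝ) - q := by linarith
    linarith

end Birkhoff

section Maker

variable {μ : Measure X} [IsProbabilityMeasure μ] {T : X → X}

lemma ae_iterate (hT : MeasurePreserving T μ μ) {p : X → Prop} (hp : ∀ᵐ x ∂μ, p x) :
    ∀ᵐ x ∂μ, ∀ i : ℕ, p (T^[i] x) := by
  rw [ae_all_iff]
  intro i
  exact (hT.iterate i).quasiMeasurePreserving.ae hp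

/-- tail sup of deviations, valued in `ENNReal`. -/
noncomputable def Hsup (g' : ℕ → X → ℝ) (gl : X → ℝ) (N : ℕ) (x : X) : ENNReal :=
  ⨆ k : ℕ, ENNReal.ofReal |g' (N + 1 + k) x - gl x|

lemma Hsup_measurable {g' : ℕ → X → ℝ} {gl : X → ℝ} (hg' : ∀ n, Measurable (g' n))
    (hgl : Measurable gl) (N : ℕ) : Measurable (Hsup g' gl N) :=
  Measurable.iSup fun k => ((hg' (N + 1 + k)).sub hgl).abs.ennreal_ofReal

lemma Hsup_antitone (g' : ℕ → X → ℝ) (gl : X → ℝ) (x : X) :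
    Antitone (fun N => Hsup g' gl N x) := by
  apply antitone_nat_of_succ_le
  intro N
  apply iSup_le
  intro k
  have : N + 1 + 1 + k = N + 1 + (k + 1) := by omega
  rw [this]
  exact le_iSup (fun k => ENNReal.ofReal |g' (N + 1 + k) x - gl x|) (k + 1)

lemma le_Hsup (g' : ℕ → X → ℝ) (gl : X → ℝ) {N m : ℕ} (h : N + 1 ≤ m) (x : X) :
    ENNReal.ofReal |g' m x - gl x| ≤ Hsup g' gl N x := by
  have : N + 1 + (m - (N+1)) = m := by omega
  conv_lhs => rw [← this]
  exact le_iSup (fun k => ENNReal.ofReal |g' (N + 1 + k) x - gl x|) (m - (N+1))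

lemma A_nonneg (T : X → X) {φ : X → ℝ} (hφ : ∀ y, 0 ≤ φ y) (n : ℕ) (x : X) :
    0 ≤ A T φ n x :=
  div_nonneg (Finset.sum_nonneg fun i _ => hφ _) (Nat.cast_nonneg n)

lemma integral_S (hT : MeasurePreserving T μ μ) {f : X → ℝ} (hf : Integrable f μ) (n : ℕ) :
    ∫ x, S T f n x ∂μ = n * ∫ x, f x ∂μ := by
  have h1 : ∫ x, S T f n x ∂μ = ∑ i ∈ Finset.range n, ∫ x, f (T^[i] x) ∂μ := by
    simp only [S]
    exact integral_finset_sum _ (fun i _ => integrable_comp_iterate hT hf i)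
  rw [h1]
  have h2 : ∀ i ∈ Finset.range n, ∫ x, f (T^[i] x) ∂μ = ∫ x, f x ∂μ :=
    fun i _ => integral_comp_iterate hT hf i
  rw [Finset.sum_congr rfl h2, Finset.sum_const, Finset.card_range, nsmul_eq_mul]

lemma integral_A (hT : MeasurePreserving T μ μ) {f : X → ℝ} (hf : Integrable f μ) {n : ℕ}
    (hn : 1 ≤ n) : ∫ x, A T f n x ∂μ = ∫ x, f x ∂μ := by
  have hn0 : (n:ℝ) ≠ 0 := by
    have : (0:ℕ) < n := hn
    exact_mod_cast this.ne'
  simp only [A, div_eq_mul_inv]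
  rw [integral_mul_const, integral_S hT hf n]
  field_simp

/-- the tail part of the Birkhoff average tends to zero -/
lemma avg_tail_zero {φ : X → ℝ} {x : X} {l : ℝ}
    (hA : Tendsto (fun n => A T φ n x) atTop (𝓝 l)) (N : ℕ) :
    Tendsto (fun n => (S T φ n x - S T φ (n - N) x) / n) atTop (𝓝 0) := by
  have h2 : Tendsto (fun n => A T φ (n - N) x) atTop (𝓝 l) :=
    hA.comp (tendsto_sub_atTop_nat N)
  have h3 : Tendsto (fun n : ℕ => ((n - N : ℕ) : ℝ) / n) atTop (𝓝 1) := by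
    have base : Tendsto (fun n : ℕ => 1 - (N : ℝ) / n) atTop (𝓝 1) := by
      have := (tendsto_const_div_atTop_nhds_zero_nat (N : ℝ))
      have h' := (tendsto_const_nhds (x := (1:ℝ)) (f := atTop (α := ℕ))).sub this
      simpa using h'
    apply base.congr'
    filter_upwards [eventually_ge_atTop (N + 1)] with n hn
    have h1 : N ≤ n := by omega
    have hn0 : (0:ℝ) < n := by
      have : (1:ℕ) ≤ n := by omega
      exact_mod_cast this
    rw [Nat.cast_sub h1]
    field_simp
  have h4 : Tendsto (fun n => A T φ n x - ((n - N : ℕ) : ℝ) / n * A T φ (n - N) x)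
      atTop (𝓝 0) := by
    have := hA.sub (h3.mul h2)
    simpa using this
  apply h4.congr'
  filter_upwards [eventually_ge_atTop (N + 1)] with n hn
  have hnn : (0:ℝ) < n := by
    have : (1:ℕ) ≤ n := by omega
    exact_mod_cast this
  have hmn : (0:ℝ) < ((n - N : ℕ) : ℝ) := by
    have : (1:ℕ) ≤ n - N := by omega
    exact_mod_cast this
  rw [A, A, div_mul_div_comm, sub_div]
  congr 1
  field_simp

end Maker
end MakerAux

open MakerAux in
/-- Maker's ergodic theorem: if `g_n → g_∞` a.e. and `sup_n |g_n|` is dominated by an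
integrable function, then a.e. the averages `(1/n) ∑_{k<n} g_{n−k}(T^k x)` converge to the
same limit as the Birkhoff averages of `g_∞`; if moreover `T` is ergodic, this limit is
`∫ g_∞ dℙ` a.e. -/
theorem maker_ergodic_theorem {X : Type*} [MeasurableSpace X]
    (μ : Measure X) [IsProbabilityMeasure μ] (T : X → X)
    (hT : MeasurePreserving T μ μ)
    (g : ℕ → X → ℝ) (glim : X → ℝ)
    (hint : ∀ n, Integrable (g n) μ)
    (hconv : ∀ᵐ x ∂μ, Tendsto (fun n => g n x) atTop (𝓝 (glim x)))
    (G : X → ℝ) (hG : Integrable G μ) (hdom : ∀ n x, |g n x| ≤ G x) :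
    (∀ᵐ x ∂μ, ∃ L : ℝ,
        Tendsto (fun n => (∑ i ∈ Finset.range n, glim (T^[i] x)) / n) atTop (𝓝 L) ∧
        Tendsto (fun n => (∑ i ∈ Finset.range n, g (n - i) (T^[i] x)) / n) atTop (𝓝 L))
      ∧ (Ergodic T μ →
        ∀ᵐ x ∂μ, Tendsto (fun n => (∑ i ∈ Finset.range n, g (n - i) (T^[i] x)) / n)
          atTop (𝓝 (∫ x, glim x ∂μ))) := by
  classical
  -- measurable representatives
  have hgam : ∀ n, AEMeasurable (g n) μ := fun n => (hint n).aemeasurable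
  set g' : ℕ → X → ℝ := fun n => (hgam n).mk (g n) with hg'def
  have hg'm : ∀ n, Measurable (g' n) := fun n => (hgam n).measurable_mk
  have hg'e : ∀ n, g n =ᵐ[μ] g' n := fun n => (hgam n).ae_eq_mk
  have hglam : AEMeasurable glim μ := aemeasurable_of_tendsto_metrizable_ae atTop hgam hconv
  set gl : X → ℝ := hglam.mk glim with hgldef
  have hglm : Measurable gl := hglam.measurable_mk
  have hgle : glim =ᵐ[μ] gl := hglam.ae_eq_mk
  have hGnonneg : ∀ x, 0 ≤ G x := fun x => (abs_nonneg _).trans (hdom 0 x)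
  -- a.e. facts about the representatives
  have hconv' : ∀ᵐ x ∂μ, Tendsto (fun n => g' n x) atTop (𝓝 (gl x)) := by
    have hall : ∀ᵐ x ∂μ, ∀ n, g n x = g' n x := ae_all_iff.mpr hg'e
    filter_upwards [hconv, hall, hgle] with x h1 h2 h3
    rw [← h3]
    exact h1.congr h2
  have hdom' : ∀ᵐ x ∂μ, ∀ n, |g' n x| ≤ G x := by
    rw [ae_all_iff]
    intro n
    filter_upwards [hg'e n] with x hx
    rw [← hx]
    exact hdom n x
  have hglb : ∀ᵐ x ∂μ, |gl x| ≤ G x := by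
    filter_upwards [hconv', hdom'] with x h1 h2
    exact le_of_tendsto h1.abs (Filter.Eventually.of_forall h2)
  have hgl_int : Integrable gl μ := Integrable.mono' hG hglm.aestronglyMeasurable
    (by filter_upwards [hglb] with x hx; simpa [Real.norm_eq_abs] using hx)
  -- the dominating tail functions h N
  set h : ℕ → X → ℝ := fun N x => (Hsup g' gl N x).toReal with hhdef
  have hhm : ∀ N, Measurable (h N) := fun N => (Hsup_measurable hg'm hglm N).ennreal_toReal
  have hh0 : ∀ N x, 0 ≤ h N x := fun N x => ENNReal.toReal_nonneg
  have hHb : ∀ᵐ x ∂μ, Hsup g' gl 0 x ≤ ENNReal.ofReal (2 * G x) := by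
    filter_upwards [hdom', hglb] with x h1 h2
    apply iSup_le
    intro k
    apply ENNReal.ofReal_le_ofReal
    calc |g' (0 + 1 + k) x - gl x| ≤ |g' (0 + 1 + k) x| + |gl x| := abs_sub _ _
      _ ≤ 2 * G x := by have := h1 (0 + 1 + k); linarith
  have hHfin : ∀ᵐ x ∂μ, ∀ N, Hsup g' gl N x ≠ ⊤ := by
    filter_upwards [hHb] with x hx N
    exact ne_top_of_le_ne_top ENNReal.ofReal_ne_top
      ((Hsup_antitone g' gl x (Nat.zero_le N)).trans hx)
  have hhb : ∀ᵐ x ∂μ, ∀ N, h N x ≤ 2 * G x := by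
    filter_upwards [hHb] with x hx N
    have hle := (Hsup_antitone g' gl x (Nat.zero_le N)).trans hx
    calc h N x ≤ (ENNReal.ofReal (2 * G x)).toReal :=
          ENNReal.toReal_mono ENNReal.ofReal_ne_top hle
      _ = 2 * G x := ENNReal.toReal_ofReal (by linarith [hGnonneg x])
  have hh_int : ∀ N, Integrable (h N) μ := fun N =>
    Integrable.mono' (hG.const_mul 2) (hhm N).aestronglyMeasurable
      (by filter_upwards [hhb] with x hx
          rw [Real.norm_eq_abs, abs_of_nonneg (hh0 N x)]
          exact hx N)
  have hh_tend0 : ∀ᵐ x ∂μ, Tendsto (fun N => h N x) atTop (𝓝 0) := by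
    filter_upwards [hconv'] with x h1
    rw [Metric.tendsto_atTop]
    intro ε hε
    rw [Metric.tendsto_atTop] at h1
    obtain ⟨N0, hN0⟩ := h1 (ε/2) (by linarith)
    refine ⟨N0, fun N hN => ?_⟩
    have hH : Hsup g' gl N x ≤ ENNReal.ofReal (ε/2) := by
      apply iSup_le
      intro k
      apply ENNReal.ofReal_le_ofReal
      have := hN0 (N + 1 + k) (by omega)
      rw [Real.dist_eq] at this
      exact le_of_lt this
    have : h N x ≤ ε/2 := by
      calc h N x ≤ (ENNReal.ofReal (ε/2)).toReal := ENNReal.toReal_mono ENNReal.ofReal_ne_top hH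
        _ = ε/2 := ENNReal.toReal_ofReal (by linarith)
    rw [Real.dist_eq, sub_zero, abs_of_nonneg (hh0 N x)]
    linarith
  have hint_tend : Tendsto (fun N => ∫ x, h N x ∂μ) atTop (𝓝 0) := by
    have := tendsto_integral_of_dominated_convergence (fun x => 2 * G x)
      (fun N => (hhm N).aestronglyMeasurable) (hG.const_mul 2)
      (fun N => by filter_upwards [hhb] with x hx
                   rw [Real.norm_eq_abs, abs_of_nonneg (hh0 N x)]
                   exact hx N)
      (f := fun _ => (0:ℝ)) hh_tend0
    simpa using this
  -- Birkhoff limits of the h N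
  set ℓ : ℕ → X → ℝ := fun N x =>
    if hx : ∃ L, Tendsto (fun n => A T (h N) n x) atTop (𝓝 L) then hx.choose else 0 with hℓdef
  have hℓ_tend : ∀ᵐ x ∂μ, ∀ N, Tendsto (fun n => A T (h N) n x) atTop (𝓝 (ℓ N x)) := by
    rw [ae_all_iff]
    intro N
    filter_upwards [birkhoff_exists hT (hhm N) (hh_int N)] with x hx
    simp only [hℓdef, dif_pos hx]
    exact hx.choose_spec
  have hℓ_meas : ∀ N, AEMeasurable (ℓ N) μ := fun N =>
    aemeasurable_of_tendsto_metrizable_ae atTop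
      (fun n => (A_measurable hT.measurable (hhm N) n).aemeasurable)
      (by filter_upwards [hℓ_tend] with x hx using hx N)
  have hℓ_nonneg : ∀ᵐ x ∂μ, ∀ N, 0 ≤ ℓ N x := by
    filter_upwards [hℓ_tend] with x hx N
    exact le_of_tendsto_of_tendsto' tendsto_const_nhds (hx N)
      (fun n => A_nonneg T (hh0 N) n x)
  have hℓ_anti : ∀ᵐ x ∂μ, ∀ N, ℓ (N + 1) x ≤ ℓ N x := by
    filter_upwards [hℓ_tend, ae_iterate hT hHfin] with x hx hfin N
    apply le_of_tendsto_of_tendsto' (hx (N + 1)) (hx N)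
    intro n
    rcases Nat.eq_zero_or_pos n with hn | hn
    · subst hn; simp [A, S]
    · have hn' : (0:ℝ) < n := by exact_mod_cast hn
      apply div_le_div_of_nonneg_right ?_ hn'.le
      apply Finset.sum_le_sum
      intro i _
      exact ENNReal.toReal_mono (hfin i N)
        (Hsup_antitone g' gl (T^[i] x) (Nat.le_succ N))
  have hfatou : ∀ N, (∫⁻ x, ENNReal.ofReal (ℓ N x) ∂μ) ≤ ENNReal.ofReal (∫ x, h N x ∂μ) := by
    intro N
    have hstep1 : (∫⁻ x, ENNReal.ofReal (ℓ N x) ∂μ)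
        = ∫⁻ x, liminf (fun n => ENNReal.ofReal (A T (h N) n x)) atTop ∂μ := by
      apply lintegral_congr_ae
      filter_upwards [hℓ_tend] with x hx
      exact ((ENNReal.tendsto_ofReal (hx N)).liminf_eq).symm
    rw [hstep1]
    have hstep2 := lintegral_liminf_le
      (fun n => (A_measurable hT.measurable (hhm N) n).ennreal_ofReal) (μ := μ) (u := atTop)
    apply hstep2.trans
    have heach : ∀ n, 1 ≤ n → (∫⁻ x, ENNReal.ofReal (A T (h N) n x) ∂μ)
        = ENNReal.ofReal (∫ x, h N x ∂μ) := by
      intro n hn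
      have hAint : Integrable (fun x => A T (h N) n x) μ := by
        simpa [A] using (S_integrable hT (hh_int N) n).div_const (n:ℝ)
      rw [← ofReal_integral_eq_lintegral_ofReal hAint
        (Filter.Eventually.of_forall (fun x => A_nonneg T (hh0 N) n x))]
      rw [integral_A hT (hh_int N) hn]
    have hconst : liminf (fun n => ∫⁻ x, ENNReal.ofReal (A T (h N) n x) ∂μ) atTop
        = liminf (fun _ : ℕ => ENNReal.ofReal (∫ x, h N x ∂μ)) atTop := by
      apply liminf_congr
      filter_upwards [eventually_ge_atTop 1] with n hn
      exact heach n hn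
    rw [hconst, liminf_const]
  have hℓ0 : ∀ᵐ x ∂μ, Tendsto (fun N => ℓ N x) atTop (𝓝 0) := by
    have hc0 : ∀ᵐ x ∂μ, (⨅ N, ENNReal.ofReal (ℓ N x)) = 0 := by
      have hcm : AEMeasurable (fun x => ⨅ N, ENNReal.ofReal (ℓ N x)) μ :=
        AEMeasurable.iInf (fun N => (hℓ_meas N).ennreal_ofReal)
      have hle : ∀ N, (∫⁻ x, (⨅ N', ENNReal.ofReal (ℓ N' x)) ∂μ)
          ≤ ENNReal.ofReal (∫ x, h N x ∂μ) :=
        fun N => (lintegral_mono fun x => iInf_le _ N).trans (hfatou N)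
      have hz : (∫⁻ x, (⨅ N', ENNReal.ofReal (ℓ N' x)) ∂μ) = 0 := by
        have htends : Tendsto (fun N => ENNReal.ofReal (∫ x, h N x ∂μ)) atTop (𝓝 0) := by
          have := ENNReal.tendsto_ofReal hint_tend
          simpa using this
        have := ge_of_tendsto htends (Filter.Eventually.of_forall hle)
        simpa using this
      have := (lintegral_eq_zero_iff' hcm).mp hz
      filter_upwards [this] with x hx
      exact hx
    filter_upwards [hc0, hℓ_anti, hℓ_nonneg] with x hx hanti hnn
    have hmono : Antitone (fun N => ENNReal.ofReal (ℓ N x)) :=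
      antitone_nat_of_succ_le (fun N => ENNReal.ofReal_le_ofReal (hanti N))
    have htend : Tendsto (fun N => ENNReal.ofReal (ℓ N x)) atTop (𝓝 0) := by
      have := tendsto_atTop_ciInf hmono (OrderBot.bddBelow _)
      rwa [hx] at this
    have htr := (ENNReal.tendsto_toReal (a := 0) (by simp)).comp htend
    simp only [ENNReal.toReal_zero] at htr
    refine Tendsto.congr ?_ htr
    intro N
    exact ENNReal.toReal_ofReal (hnn N)
  -- the key difference estimate
  have horb_fin : ∀ᵐ x ∂μ, ∀ i : ℕ, ∀ N, Hsup g' gl N (T^[i] x) ≠ ⊤ := ae_iterate hT hHfin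
  have hdiff : ∀ᵐ x ∂μ, Tendsto
      (fun n => (∑ i ∈ Finset.range n, g' (n - i) (T^[i] x)) / n - A T gl n x)
      atTop (𝓝 0) := by
    filter_upwards [hℓ_tend, hℓ0, horb_fin] with x hxt hxl hxf
    rw [Metric.tendsto_atTop]
    intro ε hε
    obtain ⟨N, hN⟩ := (hxl.eventually_lt_const (show (0:ℝ) < ε/2 by linarith)).exists
    have htail := avg_tail_zero (hxt 0) N
    have hrhs : Tendsto (fun n => A T (h N) n x + (S T (h 0) n x - S T (h 0) (n - N) x) / n)
        atTop (𝓝 (ℓ N x + 0)) := (hxt N).add htail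
    have hev : ∀ᶠ n in atTop,
        A T (h N) n x + (S T (h 0) n x - S T (h 0) (n - N) x) / n < ε :=
      hrhs.eventually_lt_const (by linarith)
    have hbound : ∀ᶠ n in atTop,
        |(∑ i ∈ Finset.range n, g' (n - i) (T^[i] x)) / n - A T gl n x|
          ≤ A T (h N) n x + (S T (h 0) n x - S T (h 0) (n - N) x) / n := by
      filter_upwards [eventually_ge_atTop (N + 1)] with n hn
      have hn0 : (0:ℝ) < n := by
        have : (1:ℕ) ≤ n := by omega
        exact_mod_cast this
      have habs : ∀ i N', ∀ m, N' + 1 ≤ m →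
          |g' m (T^[i] x) - gl (T^[i] x)| ≤ h N' (T^[i] x) := by
        intro i N' m hm
        have h1 := le_Hsup g' gl hm (T^[i] x)
        have h2 := ENNReal.toReal_mono (hxf i N') h1
        rwa [ENNReal.toReal_ofReal (abs_nonneg _)] at h2
      have hdiffeq : (∑ i ∈ Finset.range n, g' (n - i) (T^[i] x)) / n - A T gl n x
          = (∑ i ∈ Finset.range n, (g' (n - i) (T^[i] x) - gl (T^[i] x))) / n := by
        rw [A, S, ← sub_div, ← Finset.sum_sub_distrib]
      rw [hdiffeq, abs_div, abs_of_pos hn0]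
      have hsum : |∑ i ∈ Finset.range n, (g' (n - i) (T^[i] x) - gl (T^[i] x))|
          ≤ S T (h N) n x + (S T (h 0) n x - S T (h 0) (n - N) x) := by
        apply (Finset.abs_sum_le_sum_abs _ _).trans
        have hsplit : (∑ i ∈ Finset.range n, |g' (n - i) (T^[i] x) - gl (T^[i] x)|)
            = (∑ i ∈ Finset.range (n - N), |g' (n - i) (T^[i] x) - gl (T^[i] x)|)
              + ∑ i ∈ Finset.Ico (n - N) n, |g' (n - i) (T^[i] x) - gl (T^[i] x)| := by
          rw [Finset.range_eq_Ico,
            ← Finset.sum_Ico_consecutive _ (Nat.zero_le (n - N)) (Nat.sub_le n N), Finset.range_eq_Ico]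
        rw [hsplit]
        have h1 : (∑ i ∈ Finset.range (n - N), |g' (n - i) (T^[i] x) - gl (T^[i] x)|)
            ≤ S T (h N) n x := by
          have hstep : (∑ i ∈ Finset.range (n - N), |g' (n - i) (T^[i] x) - gl (T^[i] x)|)
              ≤ ∑ i ∈ Finset.range (n - N), h N (T^[i] x) := by
            apply Finset.sum_le_sum
            intro i hi
            rw [Finset.mem_range] at hi
            exact habs i N (n - i) (by omega)
          apply hstep.trans
          apply Finset.sum_le_sum_of_subset_of_nonneg
          · exact Finset.range_subset_range.mpr (Nat.sub_le n N)
          · intro i _ _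
            exact hh0 N _
        have h2 : (∑ i ∈ Finset.Ico (n - N) n, |g' (n - i) (T^[i] x) - gl (T^[i] x)|)
            ≤ S T (h 0) n x - S T (h 0) (n - N) x := by
          have hstep : (∑ i ∈ Finset.Ico (n - N) n, |g' (n - i) (T^[i] x) - gl (T^[i] x)|)
              ≤ ∑ i ∈ Finset.Ico (n - N) n, h 0 (T^[i] x) := by
            apply Finset.sum_le_sum
            intro i hi
            rw [Finset.mem_Ico] at hi
            exact habs i 0 (n - i) (by omega)
          apply hstep.trans
          rw [Finset.sum_Ico_eq_sub _ (Nat.sub_le n N)]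
          exact le_of_eq rfl
        linarith
      calc |∑ i ∈ Finset.range n, (g' (n - i) (T^[i] x) - gl (T^[i] x))| / n
          ≤ (S T (h N) n x + (S T (h 0) n x - S T (h 0) (n - N) x)) / n := by
            apply div_le_div_of_nonneg_right hsum hn0.le
        _ = A T (h N) n x + (S T (h 0) n x - S T (h 0) (n - N) x) / n := by
            rw [add_div]; rfl
    obtain ⟨N0, hN0⟩ := (hev.and hbound).exists_forall_of_atTop
    refine ⟨N0, fun n hn => ?_⟩
    obtain ⟨h1, h2⟩ := hN0 n hn
    rw [Real.dist_eq, sub_zero]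
    calc |(∑ i ∈ Finset.range n, g' (n - i) (T^[i] x)) / n - A T gl n x|
        ≤ A T (h N) n x + (S T (h 0) n x - S T (h 0) (n - N) x) / n := h2
      _ < ε := h1
  -- assembly
  have horb_gl : ∀ᵐ x ∂μ, ∀ i : ℕ, glim (T^[i] x) = gl (T^[i] x) := ae_iterate hT hgle
  have horb_g : ∀ᵐ x ∂μ, ∀ i : ℕ, ∀ n, g n (T^[i] x) = g' n (T^[i] x) :=
    ae_iterate hT (ae_all_iff.mpr hg'e)
  constructor
  · filter_upwards [birkhoff_exists hT hglm hgl_int, hdiff, horb_gl, horb_g]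
      with x hB hD hog hogg
    obtain ⟨L, hL⟩ := hB
    refine ⟨L, ?_, ?_⟩
    · apply Tendsto.congr ?_ hL
      intro n
      simp only [A, S]
      congr 1
      exact Finset.sum_congr rfl (fun i _ => (hog i).symm)
    · have hM' : Tendsto (fun n => (∑ i ∈ Finset.range n, g' (n - i) (T^[i] x)) / n)
          atTop (𝓝 L) := by
        have := hD.add hL
        rw [zero_add] at this
        exact Tendsto.congr (fun n => by ring) this
      apply Tendsto.congr ?_ hM'
      intro n
      congr 1
      exact Finset.sum_congr rfl (fun i _ => (hogg i (n - i)).symm)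
  · intro hErg
    filter_upwards [birkhoff_ergodic hT hErg hglm hgl_int, hdiff, horb_g] with x hB hD hogg
    have hIeq : (∫ y, gl y ∂μ) = ∫ y, glim y ∂μ := integral_congr_ae hgle.symm
    rw [hIeq] at hB
    have hM' : Tendsto (fun n => (∑ i ∈ Finset.range n, g' (n - i) (T^[i] x)) / n)
        atTop (𝓝 (∫ y, glim y ∂μ)) := by
      have := hD.add hB
      rw [zero_add] at this
      exact Tendsto.congr (fun n => by ring) this
    apply Tendsto.congr ?_ hM'
    intro n
    congr 1
    exact Finset.sum_congr rfl (fun i _ => (hogg i (n - i)).symm)
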